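/- For any coprime integers a and b with b ≥ 1, and any integer 0 ≤ N < b, one has log P_N(a/b) + log P_{b-N-1}(a/b) = log b (the reflection principle). -/

import Mathlib

/-- The Sudler product `P_N(α) = ∏_{n=1}^N |2 sin(π n α)|`. -/
noncomputable def sudler (N : ℕ) (α : ℝ) : ℝ :=
  ∏ n ∈ Finset.Icc 1 N, |2 * Real.sin (Real.pi * n * α)|

open Real Finset

/-- `|1 - exp(2πix)| = |2 sin(πx)|`. -/
lemma abs_one_sub_exp (x : ℝ) :
    ‖(1 - Complex.exp (2 * Real.pi * x * Complex.I))‖ = |2 * Real.sin (Real.pi * x)| := by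
  set t : ℝ := Real.pi * x with ht
  have key : (1 : ℂ) - Complex.exp (2 * Real.pi * x * Complex.I)
      = Complex.exp (t * Complex.I) *
        (Complex.exp (-(t * Complex.I)) - Complex.exp (t * Complex.I)) := by
    rw [mul_sub, ← Complex.exp_add, ← Complex.exp_add, add_neg_cancel, Complex.exp_zero]
    rw [ht]
    push_cast
    ring_nf
  have hsin : (Complex.exp (-(↑t * Complex.I)) - Complex.exp (↑t * Complex.I))
      = -2 * Complex.I * Complex.sin t := by
    rw [Complex.sin]
    have : (Complex.I : ℂ) ≠ 0 := Complex.I_ne_zero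
    field_simp
    ring_nf
    rw [Complex.I_sq]
    ring
  rw [key, norm_mul, Complex.norm_exp_ofReal_mul_I, one_mul, hsin, ← Complex.ofReal_sin,
    norm_mul, Complex.norm_real, Real.norm_eq_abs]
  have h2 : ‖(-2 * Complex.I)‖ = 2 := by simp
  rw [h2, abs_mul]
  norm_num

/-- Full product: `∏_{n=1}^{b-1} |2 sin(π n a/b)| = b` for `gcd(a,b)=1`. -/
lemma full_prod (a : ℤ) (m : ℕ) (hab : IsCoprime a ((m + 1 : ℕ) : ℤ)) :
    ∏ n ∈ Finset.Icc 1 m, |2 * Real.sin (Real.pi * n * ((a : ℝ) / (m + 1 : ℕ)))|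
      = (m + 1 : ℕ) := by
  set b : ℕ := m + 1 with hbdef
  have hb : (b : ℂ) ≠ 0 := Nat.cast_ne_zero.mpr (by omega)
  set ζ : ℂ := Complex.exp (2 * Real.pi * Complex.I / b) ^ (a : ℤ) with hζ
  have hprim : IsPrimitiveRoot ζ b := by
    refine (Complex.isPrimitiveRoot_exp b (by omega)).zpow_of_gcd_eq_one a ?_
    rwa [← Int.isCoprime_iff_gcd_eq_one]
  have hpow : ∀ k : ℕ, ζ ^ k
      = Complex.exp (2 * Real.pi * ((((k : ℝ) * a / b : ℝ)) : ℂ) * Complex.I) := by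
    intro k
    rw [hζ, ← zpow_natCast, ← zpow_mul, ← Complex.exp_int_mul]
    congr 1
    push_cast
    field_simp
  have key := hprim.prod_one_sub_pow_eq_order (n := m)
  have habs := congrArg (‖·‖) key
  rw [norm_prod] at habs
  have hIcc : Finset.Icc 1 m = Finset.Ico 1 (m + 1) := by rw [Finset.Ico_add_one_right_eq_Icc]
  rw [hIcc, Finset.prod_Ico_eq_prod_range]
  rw [show m + 1 - 1 = m from rfl]
  calc ∏ k ∈ Finset.range m, |2 * Real.sin (Real.pi * (1 + k : ℕ) * ((a : ℝ) / b))|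
      = ∏ k ∈ Finset.range m, ‖(1 - ζ ^ (k + 1))‖ := by
        refine Finset.prod_congr rfl fun k _ => ?_
        rw [hpow, abs_one_sub_exp]
        congr 2
        push_cast
        ring
    _ = (m + 1 : ℕ) := by
        rw [habs, show ((m : ℂ) + 1) = ((m + 1 : ℕ) : ℂ) by push_cast; ring,
          Complex.norm_natCast]

lemma abs_sin_reflect (a : ℤ) (b : ℕ) (hb : 0 < b) (n : ℕ) (hn : n ≤ b) :
    |2 * Real.sin (Real.pi * ((b - n : ℕ) : ℝ) * ((a : ℝ) / b))|
      = |2 * Real.sin (Real.pi * n * ((a : ℝ) / b))| := by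
  have hbne : (b : ℝ) ≠ 0 := Nat.cast_ne_zero.mpr hb.ne'
  have hcast : ((b - n : ℕ) : ℝ) = (b : ℝ) - n := by
    push_cast [hn]; ring
  have harg : Real.pi * ((b : ℝ) - n) * ((a : ℝ) / b)
      = (a : ℝ) * Real.pi - Real.pi * n * ((a : ℝ) / b) := by
    field_simp
  have hc : |Real.cos ((a : ℝ) * Real.pi)| = 1 := by
    have h := Real.sin_sq_add_cos_sq ((a : ℝ) * Real.pi)
    rw [Real.sin_int_mul_pi] at h
    nlinarith [abs_nonneg (Real.cos ((a : ℝ) * Real.pi)),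
      sq_abs (Real.cos ((a : ℝ) * Real.pi))]
  rw [hcast, harg, Real.sin_sub, Real.sin_int_mul_pi, zero_mul, zero_sub, mul_neg, abs_neg,
    abs_mul, abs_mul, hc, one_mul, ← abs_mul]

/-- The reflection principle: `log P_N(a/b) + log P_{b-N-1}(a/b) = log b`. -/
theorem sudler_reflection (a b N : ℤ) (hb : 1 ≤ b) (hab : IsCoprime a b)
    (hN0 : 0 ≤ N) (hNb : N < b) :
    Real.log (sudler N.toNat ((a : ℝ) / b)) +
      Real.log (sudler (b - N - 1).toNat ((a : ℝ) / b)) = Real.log b := by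
  obtain ⟨m, rfl⟩ : ∃ m : ℕ, b = ((m + 1 : ℕ) : ℤ) := ⟨(b - 1).toNat, by omega⟩
  set M : ℕ := N.toNat with hM
  have hMm : M ≤ m := by omega
  have h1 : (((m + 1 : ℕ) : ℤ) - N - 1).toNat = m - M := by omega
  set α : ℝ := (a : ℝ) / ((m + 1 : ℕ) : ℝ) with hα
  have hcast : ((((m + 1 : ℕ) : ℤ)) : ℝ) = ((m + 1 : ℕ) : ℝ) := by push_cast; ring
  rw [h1, hcast]
  -- the product identity
  have hsplit : sudler M α * sudler (m - M) α
      = ∏ n ∈ Finset.Icc 1 m, |2 * Real.sin (Real.pi * n * α)| := by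
    have h2 : sudler (m - M) α
        = ∏ n ∈ Finset.Ioc M m, |2 * Real.sin (Real.pi * n * α)| := by
      rw [sudler]
      refine Finset.prod_nbij' (fun j => m + 1 - j) (fun j => m + 1 - j)
        (fun j hj => ?_) (fun j hj => ?_) (fun j hj => ?_) (fun j hj => ?_) (fun j hj => ?_)
      · simp only [Finset.mem_Icc, Finset.mem_Ioc] at *; omega
      · simp only [Finset.mem_Icc, Finset.mem_Ioc] at *; omega
      · simp only [Finset.mem_Icc] at hj; show m + 1 - (m + 1 - j) = j; omega
      · simp only [Finset.mem_Ioc] at hj; show m + 1 - (m + 1 - j) = j; omega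
      · simp only [Finset.mem_Icc] at hj
        have := abs_sin_reflect a (m + 1) (by omega) j (by omega)
        rw [hα]
        exact this.symm
    rw [sudler, h2, show Finset.Icc 1 M = Finset.Ioc 0 M from Finset.Icc_add_one_left_eq_Ioc 0 M, show Finset.Icc 1 m = Finset.Ioc 0 m from Finset.Icc_add_one_left_eq_Ioc 0 m,
      Finset.prod_Ioc_consecutive _ (Nat.zero_le M) hMm]
  have hfull := full_prod a m hab
  have hprod : sudler M α * sudler (m - M) α = ((m + 1 : ℕ) : ℝ) := by
    rw [hsplit]; exact hfull
  have hne : ((m + 1 : ℕ) : ℝ) ≠ 0 := by positivity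
  have hx : sudler M α ≠ 0 := fun h => hne (by rw [← hprod, h, zero_mul])
  have hy : sudler (m - M) α ≠ 0 := fun h => hne (by rw [← hprod, h, mul_zero])
  rw [← Real.log_mul hx hy, hprod]
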